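/- Let ω be a Brun word over 3 letters with directive sequence (β_{i_n j_n})_{n∈ℕ}, and let f^{(n)} be the normalized frequency vector of ω^{(n)}. Then f^{(n−h)}_{i_n} ≥ 1/(F_{h+1} + 1) for all h ≤ n, where (F_n) are the Fibonacci numbers with F_0 = 1, F_1 = 2, F_n = F_{n−1} + F_{n−2}. -/

import Mathlib

def prefixW {A : Type*} (w : ℕ → A) (n : ℕ) : List A := (List.range n).map w

def IsFactor {A : Type*} (w : ℕ → A) (u : List A) : Prop :=
  ∃ k, u = (List.range u.length).map (fun t => w (k + t))

def applySub {A : Type*} (σ : A → List A) (w : List A) : List A := w.flatMap σ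

def SubstOfInf {A : Type*} (σ : A → List A) (w' w : ℕ → A) : Prop :=
  ∀ m, prefixW w (applySub σ (prefixW w' m)).length = applySub σ (prefixW w' m)

def FactorOfImage {A : Type*} (σ : A → List A) (ω : ℕ → A) (u : List A) : Prop :=
  ∃ w, IsFactor ω w ∧ u <:+: applySub σ w

def BalancedWord {A : Type*} [DecidableEq A] (C : ℕ) (w : ℕ → A) : Prop :=
  ∀ u v, IsFactor w u → IsFactor w v → u.length = v.length →
    ∀ i, |(u.count i : ℤ) - (v.count i : ℤ)| ≤ (C : ℤ)

open Matrix

def prodSeq {d : ℕ} (M : ℕ → Matrix (Fin d) (Fin d) ℝ) : ℕ → Matrix (Fin d) (Fin d) ℝ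
  | 0 => 1
  | n + 1 => prodSeq M n * M n

def brunSub (i j : Fin 3) : Fin 3 → List (Fin 3) := fun k => if k = j then [i, j] else [k]

def brunMat (i j : Fin 3) : Matrix (Fin 3) (Fin 3) ℝ :=
  Matrix.of fun r c => (if r = c then (1:ℝ) else 0) + (if r = i ∧ c = j then 1 else 0)

def fib2 : ℕ → ℕ
  | 0 => 1
  | 1 => 2
  | n + 2 => fib2 (n + 1) + fib2 n

noncomputable def brunFvec (i j : ℕ → Fin 3) (f : Fin 3 → ℝ) (n : ℕ) : Fin 3 → ℝ :=
  fun r => ((prodSeq (fun m => brunMat (i m) (j m)) n)⁻¹.mulVec f) r /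
    ∑ c, ((prodSeq (fun m => brunMat (i m) (j m)) n)⁻¹.mulVec f) c



open Filter

lemma prefixW_length {A : Type*} (w : ℕ → A) (n : ℕ) : (prefixW w n).length = n := by
  simp [prefixW]

lemma prefixW_take {A : Type*} (w : ℕ → A) {m M : ℕ} (h : m ≤ M) :
    (prefixW w M).take m = prefixW w m := by
  simp [prefixW, ← List.map_take, List.take_range, h]

lemma sum_count_fin3 (l : List (Fin 3)) : ∑ a : Fin 3, l.count a = l.length := by
  induction l with
  | nil => simp
  | cons b t ih =>
    simp only [List.count_cons, List.length_cons, Finset.sum_add_distrib, ih]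
    simp [Finset.sum_ite_eq]

lemma count_brunSub (i j b a : Fin 3) :
    (brunSub i j b).count a
      = (if a = b then 1 else 0) + (if b = j ∧ a = i then 1 else 0) := by
  revert i j b a; decide

lemma length_brunSub (i j b : Fin 3) :
    (brunSub i j b).length = 1 + (if b = j then 1 else 0) := by
  revert i j b; decide

lemma brunSub_count (i j : Fin 3) (hij : i ≠ j) (w : List (Fin 3)) (a : Fin 3) :
    (applySub (brunSub i j) w).count a
      = w.count a + (if a = i then w.count j else 0) := by
  induction w with
  | nil => simp [applySub]
  | cons b t ih =>
    show ((brunSub i j b) ++ applySub (brunSub i j) t).count a = _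
    rw [List.count_append, ih, count_brunSub, List.count_cons, List.count_cons]
    split_ifs <;> subst_vars <;> simp_all <;> omega

lemma brunSub_length (i j : Fin 3) (hij : i ≠ j) (w : List (Fin 3)) :
    (applySub (brunSub i j) w).length = w.length + w.count j := by
  induction w with
  | nil => simp [applySub]
  | cons b t ih =>
    show ((brunSub i j b) ++ applySub (brunSub i j) t).length = _
    rw [List.length_append, ih, List.count_cons, List.length_cons]
    by_cases hbj : b = j <;> simp [brunSub, hbj] <;> omega

lemma brunSub_take_count (i j : Fin 3) (hij : i ≠ j) (w : List (Fin 3)) (n : ℕ) :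
    ((applySub (brunSub i j) w).take n).count j ≤ ((applySub (brunSub i j) w).take n).count i := by
  induction w generalizing n with
  | nil => simp [applySub]
  | cons b t ih =>
    show (((brunSub i j b) ++ applySub (brunSub i j) t).take n).count j
        ≤ (((brunSub i j b) ++ applySub (brunSub i j) t).take n).count i
    rw [List.take_append, List.count_append, List.count_append]
    have h2 := ih (n - (brunSub i j b).length)
    have h1 : ((brunSub i j b).take n).count j ≤ ((brunSub i j b).take n).count i := by
      by_cases hbj : b = j
      · subst hbj
        match n with
        | 0 => simp [brunSub]
        | 1 =>
          simp only [brunSub, if_pos rfl, List.take_cons, List.take_zero]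
          exact le_trans List.count_le_length (by simp)
        | (n+2) => simp [brunSub, List.take_cons, List.count_cons, hij, Ne.symm hij]
      · match n with
        | 0 => simp [brunSub, hbj]
        | (n+1) => simp [brunSub, hbj, List.count_singleton, hij, Ne.symm hij]
    omega


def Freq (w : ℕ → Fin 3) (φ : Fin 3 → ℝ) : Prop :=
  ∀ a, Tendsto (fun m => (((prefixW w m).count a : ℝ))/(m:ℝ)) atTop (nhds (φ a))

lemma Freq.nonneg {w φ} (h : Freq w φ) (a : Fin 3) : 0 ≤ φ a :=
  le_of_tendsto_of_tendsto' tendsto_const_nhds (h a) (fun m => by positivity)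

lemma Freq.sum_one {w φ} (h : Freq w φ) : ∑ a, φ a = 1 := by
  have h1 : Tendsto (fun m : ℕ => ∑ a : Fin 3, (((prefixW w m).count a : ℝ))/(m:ℝ))
      atTop (nhds (∑ a, φ a)) := tendsto_finset_sum _ (fun a _ => h a)
  have h2 : Tendsto (fun m : ℕ => ∑ a : Fin 3, (((prefixW w m).count a : ℝ))/(m:ℝ))
      atTop (nhds 1) := by
    apply Tendsto.congr' _ tendsto_const_nhds
    filter_upwards [eventually_gt_atTop 0] with m hm
    rw [← Finset.sum_div]
    rw [show ∑ a : Fin 3, (((prefixW w m).count a : ℝ)) = (m : ℝ) by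
      rw [← Nat.cast_sum, sum_count_fin3, prefixW_length]]
    field_simp
  exact tendsto_nhds_unique h1 h2

lemma Freq.le_one {w φ} (h : Freq w φ) (a : Fin 3) : φ a ≤ 1 := by
  have := h.sum_one
  have h0 := h.nonneg
  fin_cases a <;> simp [Fin.sum_univ_three] at this ⊢ <;>
    [linarith [h0 1, h0 2]; linarith [h0 0, h0 2]; linarith [h0 0, h0 1]]

lemma Freq.unique {w φ φ'} (h : Freq w φ) (h' : Freq w φ') : φ = φ' :=
  funext fun a => tendsto_nhds_unique (h a) (h' a)

lemma freq_ji (i j : Fin 3) (hij : i ≠ j) (w' w : ℕ → Fin 3)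
    (hsub : SubstOfInf (brunSub i j) w' w) {φ} (hφ : Freq w φ) : φ j ≤ φ i := by
  apply le_of_tendsto_of_tendsto (hφ j) (hφ i)
  filter_upwards [eventually_gt_atTop 0] with M hM
  have key : (prefixW w M).count j ≤ (prefixW w M).count i := by
    have hM' : M ≤ (applySub (brunSub i j) (prefixW w' M)).length := by
      rw [brunSub_length i j hij, prefixW_length]; omega
    have hpre : prefixW w M = (applySub (brunSub i j) (prefixW w' M)).take M := by
      rw [← hsub M, prefixW_take w hM']
    rw [hpre]
    exact brunSub_take_count i j hij _ M
  have hMpos : (0:ℝ) < M := by exact_mod_cast hM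
  exact (div_le_div_iff_of_pos_right hMpos).mpr (Nat.cast_le.mpr key)

lemma freq_step (i j : Fin 3) (hij : i ≠ j) (w' w : ℕ → Fin 3)
    (hsub : SubstOfInf (brunSub i j) w' w) {φ} (hφ : Freq w φ) :
    ∃ ψ, Freq w' ψ ∧ ∀ a, φ a = (ψ a + if a = i then ψ j else 0) / (1 + ψ j) := by
  have hji : φ j ≤ φ i := freq_ji i j hij w' w hsub hφ
  have hsum := hφ.sum_one
  have hnn := hφ.nonneg
  have hij2 : φ i + φ j ≤ 1 := by
    have h3 : ∑ a, φ a = φ 0 + φ 1 + φ 2 := by rw [Fin.sum_univ_three]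
    fin_cases i <;> fin_cases j <;> simp_all <;> linarith [hnn 0, hnn 1, hnn 2]
  have hj1 : φ j < 1 := by linarith [hnn j]
  set c := φ j / (1 - φ j) with hc
  have hc0 : 0 ≤ c := div_nonneg (hnn j) (by linarith)
  set C : Fin 3 → ℕ → ℕ := fun a m => (prefixW w' m).count a with hC
  set L : ℕ → ℕ := fun m => m + C j m with hL
  have hLm : ∀ m, L m = (applySub (brunSub i j) (prefixW w' m)).length := fun m => by
    rw [brunSub_length i j hij, prefixW_length]
  have hcount : ∀ m a, (prefixW w (L m)).count a = C a m + if a = i then C j m else 0 := by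
    intro m a
    rw [hLm m, hsub m, brunSub_count i j hij]
  have hLtop : Tendsto L atTop atTop :=
    tendsto_atTop_mono (fun m => Nat.le_add_right m _) tendsto_id
  have h1 : ∀ a, Tendsto
      (fun m => ((C a m : ℝ) + (if a = i then (C j m : ℝ) else 0)) / (L m : ℝ))
      atTop (nhds (φ a)) := by
    intro a
    apply ((hφ a).comp hLtop).congr
    intro m
    simp only [Function.comp]
    rw [hcount m a]
    push_cast
    split_ifs <;> norm_num
  have hrj : Tendsto (fun m => (C j m : ℝ) / (L m : ℝ)) atTop (nhds (φ j)) := by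
    have := h1 j
    simp only [if_neg (Ne.symm hij)] at this
    simpa using this
  have hcm : Tendsto (fun m => (C j m : ℝ) / (m : ℝ)) atTop (nhds c) := by
    have hden : Tendsto (fun m => 1 - (C j m : ℝ) / (L m : ℝ)) atTop (nhds (1 - φ j)) :=
      tendsto_const_nhds.sub hrj
    apply (hrj.div hden (by linarith)).congr'
    filter_upwards [eventually_gt_atTop 0] with m hm
    have hmpos : (0:ℝ) < m := by exact_mod_cast hm
    have hLpos : (0:ℝ) < (L m : ℝ) := by
      have : m ≤ L m := Nat.le_add_right m _
      have : (m:ℝ) ≤ (L m : ℝ) := by exact_mod_cast this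
      linarith
    have hLr : (L m : ℝ) = (m : ℝ) + (C j m : ℝ) := by
      simp only [hL]; push_cast; ring
    simp only [Pi.div_apply]
    rw [hLr, one_sub_div (by positivity : (m:ℝ) + (C j m : ℝ) ≠ 0)]
    field_simp
    try ring
    try exact mul_inv_cancel_right₀ hmpos.ne' _
  refine ⟨fun a => φ a * (1 + c) - (if a = i then c else 0), ?_, ?_⟩
  · intro a
    have hmain : Tendsto
        (fun m => ((C a m : ℝ) + (if a = i then (C j m : ℝ) else 0)) / (L m : ℝ)
            * (1 + (C j m : ℝ)/(m:ℝ)) - (if a = i then (1:ℝ) else 0) * ((C j m : ℝ)/(m:ℝ)))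
        atTop (nhds (φ a * (1 + c) - (if a = i then 1 else 0) * c)) :=
      ((h1 a).mul (tendsto_const_nhds.add hcm)).sub (hcm.const_mul _)
    have : (φ a * (1 + c) - (if a = i then 1 else 0) * c)
        = φ a * (1 + c) - (if a = i then c else 0) := by split_ifs <;> ring
    rw [this] at hmain
    apply hmain.congr'
    filter_upwards [eventually_gt_atTop 0] with m hm
    have hmpos : (0:ℝ) < m := by exact_mod_cast hm
    have hLpos : (0:ℝ) < (L m : ℝ) := by
      have : (m:ℝ) ≤ (L m : ℝ) := by exact_mod_cast Nat.le_add_right m _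
      linarith
    have hLr : (L m : ℝ) = (m : ℝ) + (C j m : ℝ) := by
      simp only [hL]; push_cast; ring
    rw [hLr]
    field_simp
    split_ifs <;> simp only [hC] <;> ring
  · intro a
    have h1c : 1 - φ j ≠ 0 := by linarith
    have hψj : φ j * (1 + c) - (if j = i then c else 0) = c := by
      rw [if_neg (Ne.symm hij), sub_zero, hc]
      field_simp
      ring
    have hc1 : 1 + c ≠ 0 := by linarith
    show φ a = ((φ a * (1 + c) - if a = i then c else 0) +
        if a = i then (φ j * (1 + c) - if j = i then c else 0) else 0) /
        (1 + (φ j * (1 + c) - if j = i then c else 0))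
    rw [hψj]
    split_ifs with hai
    · rw [sub_add_cancel, mul_div_assoc, div_self hc1, mul_one]
    · rw [sub_zero, add_zero, mul_div_assoc, div_self hc1, mul_one]




lemma brunMat_mulVec (i j : Fin 3) (v : Fin 3 → ℝ) :
    (brunMat i j).mulVec v = fun r => v r + if r = i then v j else 0 := by
  funext r
  simp only [Matrix.mulVec, dotProduct, brunMat, Matrix.of_apply]
  rw [Finset.sum_congr rfl (fun c _ => add_mul _ _ _), Finset.sum_add_distrib]
  congr 1
  · simp [ite_mul]
  · by_cases h : r = i <;> simp [h, ite_mul]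

lemma brunMat_det (i j : Fin 3) (hij : i ≠ j) : (brunMat i j).det = 1 := by
  fin_cases i <;> fin_cases j <;>
    simp_all [brunMat, Matrix.det_fin_three] <;> norm_num

lemma prod_inv_eq (i j : ℕ → Fin 3) (hij : ∀ n, i n ≠ j n) (f : Fin 3 → ℝ)
    (φ : ℕ → Fin 3 → ℝ) (hf0 : φ 0 = f)
    (hnn : ∀ n a, 0 ≤ φ n a)
    (hrec : ∀ n a, φ n a
      = (φ (n+1) a + if a = i n then φ (n+1) (j n) else 0) / (1 + φ (n+1) (j n))) :
    ∀ n, ∃ lam : ℝ, 0 < lam ∧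
      (prodSeq (fun m => brunMat (i m) (j m)) n)⁻¹.mulVec f = lam • φ n := by
  intro n
  induction n with
  | zero => exact ⟨1, one_pos, by simp [prodSeq, hf0]⟩
  | succ n ih =>
    obtain ⟨lam, hl, hE⟩ := ih
    set M := brunMat (i n) (j n) with hM
    have hdet : IsUnit M.det := by rw [hM, brunMat_det _ _ (hij n)]; exact isUnit_one
    set D := φ (n+1) (j n) with hD
    have hden : (0:ℝ) < 1 + D := by have := hnn (n+1) (j n); rw [← hD] at this; linarith
    have hMv : M.mulVec (φ (n+1)) = (1 + D) • φ n := by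
      rw [hM, brunMat_mulVec]
      funext r
      have := hrec n r
      simp only [Pi.smul_apply, smul_eq_mul]
      rw [this, mul_div_cancel₀ _ hden.ne']
    have hinv : M⁻¹.mulVec (φ n) = (1+D)⁻¹ • φ (n+1) := by
      have h2 : M⁻¹.mulVec (M.mulVec (φ (n+1))) = φ (n+1) := by
        rw [Matrix.mulVec_mulVec, Matrix.nonsing_inv_mul M hdet, Matrix.one_mulVec]
      rw [hMv, Matrix.mulVec_smul] at h2
      rw [← h2, smul_smul, inv_mul_cancel₀ hden.ne', one_smul]
    refine ⟨lam * (1+D)⁻¹, by positivity, ?_⟩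
    show (prodSeq (fun m => brunMat (i m) (j m)) n * brunMat (i n) (j n))⁻¹.mulVec f = _
    rw [Matrix.mul_inv_rev, ← Matrix.mulVec_mulVec, hE, Matrix.mulVec_smul, ← hM, hinv,
      smul_smul]

lemma max_prop (i j : ℕ → Fin 3) (hij : ∀ n, i n ≠ j n)
    (hadm : ∀ n, (i (n + 1) = i n ∧ j (n + 1) = j n) ∨ i (n + 1) = j n)
    (hinf : ∀ a : Fin 3, ∀ N : ℕ, ∃ n ≥ N, i n = a)
    (φ : ℕ → Fin 3 → ℝ)
    (hnn : ∀ n a, 0 ≤ φ n a)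
    (hji : ∀ n, φ n (j n) ≤ φ n (i n))
    (hrec : ∀ n a, φ n a
      = (φ (n+1) a + if a = i n then φ (n+1) (j n) else 0) / (1 + φ (n+1) (j n))) :
    ∀ p a, φ p a ≤ φ p (i p) := by
  intro p a
  by_cases ha1 : a = i p
  · subst ha1; exact le_rfl
  by_cases ha2 : a = j p
  · subst ha2; exact hji p
  classical
  obtain ⟨N, hN, hNa⟩ := hinf a (p+1)
  have hex : ∃ q, p < q ∧ (i q = a ∨ j q = a) := ⟨N, by omega, Or.inl hNa⟩
  set m := Nat.find hex with hm
  obtain ⟨hpm, hcase⟩ := Nat.find_spec hex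
  have hmin : ∀ q, p ≤ q → q < m → i q ≠ a ∧ j q ≠ a := by
    intro q hpq hqm
    rcases eq_or_lt_of_le hpq with rfl | hq
    · exact ⟨fun h => ha1 h.symm, fun h => ha2 h.symm⟩
    · have hq2 := Nat.find_min hex hqm
      push_neg at hq2
      exact hq2 hq
  have hjm : j m = a := by
    rcases hcase with hia | hja
    · exfalso
      obtain ⟨m', hmm⟩ : ∃ m', m = m' + 1 := ⟨m - 1, by omega⟩
      have hpm' : p ≤ m' := by omega
      rcases hadm m' with ⟨h1, _⟩ | h1
      · exact (hmin m' hpm' (by omega)).1 (by rw [← h1, ← hmm]; exact hia)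
      · exact (hmin m' hpm' (by omega)).2 (by rw [← h1, ← hmm]; exact hia)
    · exact hja
  have key : ∀ d q, q + d = m → p ≤ q → φ q a ≤ φ q (i q) := by
    intro d
    induction d with
    | zero =>
      intro q hq _
      have : q = m := by omega
      subst this
      rw [← hjm]
      exact hji m
    | succ d ih =>
      intro q hq hpq
      have IH := ih (q+1) (by omega) (by omega)
      have hiq : i q ≠ a := (hmin q hpq (by omega)).1
      have hD0 : 0 ≤ φ (q+1) (j q) := hnn _ _
      have hden : (0:ℝ) < 1 + φ (q+1) (j q) := by linarith
      have ha : φ q a = φ (q+1) a / (1 + φ (q+1) (j q)) := by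
        rw [hrec q a, if_neg (fun h => hiq h.symm)]
        rw [add_zero]
      have hi : φ q (i q) = (φ (q+1) (i q) + φ (q+1) (j q)) / (1 + φ (q+1) (j q)) := by
        rw [hrec q (i q), if_pos rfl]
      rw [ha, hi]
      apply (div_le_div_iff_of_pos_right hden).mpr
      rcases hadm q with ⟨h1, _⟩ | h1
      · rw [h1] at IH; linarith
      · rw [h1] at IH
        have h0 := hnn (q+1) (i q)
        linarith
  exact key (m - p) p (by omega) le_rfl


def gaux : ℕ → ℕ
  | 0 => 1
  | (t+1) => fib2 t

lemma fib2_succ (t : ℕ) : fib2 (t+1) = fib2 t + gaux t := by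
  cases t <;> rfl

lemma fib2_pos : ∀ t, 1 ≤ fib2 t
  | 0 => le_refl 1
  | 1 => by norm_num [fib2]
  | (t+2) => by
    rw [show fib2 (t+2) = fib2 (t+1) + fib2 t from rfl]
    have := fib2_pos (t+1)
    omega

lemma gaux_pos (t : ℕ) : 1 ≤ gaux t := by
  cases t with
  | zero => exact le_refl 1
  | succ t => exact fib2_pos t

lemma gaux_le_fib2 (t : ℕ) : gaux t ≤ fib2 t := by
  cases t with
  | zero => exact le_refl 1
  | succ t => rw [show gaux (t+1) = fib2 t from rfl, fib2_succ t]; have := gaux_pos t; omega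

lemma fib_bound (i j : ℕ → Fin 3) (hij : ∀ n, i n ≠ j n)
    (hadm : ∀ n, (i (n + 1) = i n ∧ j (n + 1) = j n) ∨ i (n + 1) = j n)
    (φ : ℕ → Fin 3 → ℝ)
    (hnn : ∀ n a, 0 ≤ φ n a) (hle1 : ∀ n a, φ n a ≤ 1)
    (hsum : ∀ n, ∑ a, φ n a = 1)
    (hmax : ∀ p a, φ p a ≤ φ p (i p))
    (hrec : ∀ n a, φ n a
      = (φ (n+1) a + if a = i n then φ (n+1) (j n) else 0) / (1 + φ (n+1) (j n))) :
    ∀ t n, t ≤ n → 1/((fib2 (t+1) : ℝ) + 1) ≤ φ (n-t) (i n)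
      ∧ φ (n-t) (i (n-t)) ≤ (fib2 t : ℝ) * φ (n-t) (i n)
      ∧ ∀ a, a ≠ i (n-t) → φ (n-t) a ≤ (gaux t : ℝ) * φ (n-t) (i n) := by
  intro t
  induction t with
  | zero =>
    intro n _
    simp only [Nat.sub_zero]
    refine ⟨?_, ?_, ?_⟩
    · have hs := hsum n
      rw [Fin.sum_univ_three] at hs
      have h0 := hmax n 0; have h1 := hmax n 1; have h2 := hmax n 2
      have e : ((fib2 1:ℕ):ℝ) + 1 = 3 := by norm_num [show fib2 1 = 2 from rfl]
      rw [e, div_le_iff₀ (by norm_num : (0:ℝ) < 3)]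
      linarith
    · rw [show fib2 0 = 1 from rfl]; push_cast; rw [one_mul]
    · intro a _
      rw [show gaux 0 = 1 from rfl]; push_cast; rw [one_mul]; exact hmax n a
  | succ t ih =>
    intro n hn
    have hq1 : n - t = (n - (t+1)) + 1 := by omega
    set q := n - (t+1) with hq
    obtain ⟨hx', hi', hother⟩ := ih n (by omega)
    rw [hq1] at hx' hi' hother
    have hD0 : 0 ≤ φ (q+1) (j q) := hnn _ _
    have hden : (0:ℝ) < 1 + φ (q+1) (j q) := by linarith
    have hF1 : (1:ℝ) ≤ (fib2 t : ℝ) := by exact_mod_cast fib2_pos t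
    have hF1' : (1:ℝ) ≤ (fib2 (t+1) : ℝ) := by exact_mod_cast fib2_pos (t+1)
    have hg1 : (1:ℝ) ≤ (gaux t : ℝ) := by exact_mod_cast gaux_pos t
    have hgF : (gaux t : ℝ) ≤ (fib2 t : ℝ) := by exact_mod_cast gaux_le_fib2 t
    have hfib1 : (fib2 (t+1) : ℝ) = (fib2 t : ℝ) + (gaux t : ℝ) := by
      exact_mod_cast congrArg (Nat.cast (R := ℝ)) (fib2_succ t)
    have hfib2 : (fib2 (t+2) : ℝ) = (fib2 (t+1) : ℝ) + (fib2 t : ℝ) := by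
      exact_mod_cast congrArg (Nat.cast (R := ℝ)) (show fib2 (t+2) = fib2 (t+1) + fib2 t from rfl)
    have hx'pos : 0 < φ (q+1) (i n) := lt_of_lt_of_le (by positivity) hx'
    have hx'le : φ (q+1) (i n) ≤ 1 := hle1 _ _
    have hDle : φ (q+1) (j q) ≤ (fib2 t : ℝ) * φ (q+1) (i n) := by
      rcases hadm q with ⟨h1, h2⟩ | h1
      · have hne : j (q+1) ≠ i (q+1) := Ne.symm (hij (q+1))
        have := hother (j (q+1)) hne
        rw [h2] at this
        nlinarith
      · rw [h1] at hi'
        exact hi'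
    have hxlow : φ (q+1) (i n)/(1 + φ (q+1) (j q)) ≤ φ q (i n) := by
      rw [hrec q (i n)]
      apply (div_le_div_iff_of_pos_right hden).mpr
      split_ifs <;> linarith
    have hx'bd : 1 ≤ φ (q+1) (i n) * ((fib2 (t+1) : ℝ) + 1) := by
      rw [div_le_iff₀ (by positivity)] at hx'
      linarith
    refine ⟨?_, ?_, ?_⟩
    · refine le_trans ?_ hxlow
      rw [div_le_div_iff₀ (by positivity) hden]
      have : φ (q+1) (i n) * ((fib2 (t+1+1) : ℝ) + 1)
          = φ (q+1) (i n) * ((fib2 (t+1) : ℝ) + 1) + φ (q+1) (i n) * (fib2 t : ℝ) := by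
        rw [show (t+1+1) = t+2 from rfl, hfib2]; ring
      rw [one_mul, this]
      nlinarith
    · by_cases hiq : i q = i n
      · rw [hiq]
        nlinarith [hnn q (i n)]
      · have hrq : φ q (i n) = φ (q+1) (i n)/(1 + φ (q+1) (j q)) := by
          rw [hrec q (i n), if_neg (fun h => hiq h.symm), add_zero]
        have hnum : φ (q+1) (i q) + φ (q+1) (j q) ≤ (fib2 (t+1) : ℝ) * φ (q+1) (i n) := by
          rcases hadm q with ⟨h1, h2⟩ | h1
          · have e1 : φ (q+1) (i q) ≤ (fib2 t : ℝ) * φ (q+1) (i n) := by rw [← h1]; exact hi'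
            have e2 : φ (q+1) (j q) ≤ (gaux t : ℝ) * φ (q+1) (i n) := by
              rw [← h2]; exact hother _ (Ne.symm (hij (q+1)))
            rw [hfib1]; nlinarith
          · have e1 : φ (q+1) (i q) ≤ (gaux t : ℝ) * φ (q+1) (i n) := by
              apply hother
              rw [h1]; exact hij q
            have e2 : φ (q+1) (j q) ≤ (fib2 t : ℝ) * φ (q+1) (i n) := by
              rw [h1] at hi'; exact hi'
            rw [hfib1]; nlinarith
        rw [hrq, hrec q (i q), if_pos rfl, ← mul_div_assoc]
        exact (div_le_div_iff_of_pos_right hden).mpr hnum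
    · intro a ha
      have hra : φ q a = φ (q+1) a/(1 + φ (q+1) (j q)) := by
        rw [hrec q a, if_neg (fun h => ha h), add_zero]
      have hnum : φ (q+1) a ≤ (fib2 t : ℝ) * φ (q+1) (i n) := by
        by_cases ha2 : a = i (q+1)
        · rw [ha2]; exact hi'
        · have := hother a ha2
          nlinarith
      have : φ q a ≤ (fib2 t : ℝ) * φ (q+1) (i n) / (1 + φ (q+1) (j q)) := by
        rw [hra]
        exact (div_le_div_iff_of_pos_right hden).mpr hnum
      rw [show gaux (t+1) = fib2 t from rfl]
      calc φ q a ≤ (fib2 t : ℝ) * φ (q+1) (i n) / (1 + φ (q+1) (j q)) := this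
        _ = (fib2 t : ℝ) * (φ (q+1) (i n) / (1 + φ (q+1) (j q))) := by rw [mul_div_assoc]
        _ ≤ (fib2 t : ℝ) * φ q (i n) := by
            apply mul_le_mul_of_nonneg_left hxlow (by linarith)

theorem stmt10 (i j : ℕ → Fin 3) (hij : ∀ n, i n ≠ j n)
    (hadm : ∀ n, (i (n + 1) = i n ∧ j (n + 1) = j n) ∨ i (n + 1) = j n)
    (hinf : ∀ a : Fin 3, ∀ N : ℕ, ∃ n ≥ N, i n = a)
    (ω : ℕ → Fin 3) (Ω : ℕ → ℕ → Fin 3) (hΩ0 : Ω 0 = ω)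
    (hΩ : ∀ n, SubstOfInf (brunSub (i n) (j n)) (Ω (n + 1)) (Ω n))
    (f : Fin 3 → ℝ)
    (hf : ∀ a : Fin 3, Filter.Tendsto (fun n => (((prefixW ω n).count a : ℝ) / (n : ℝ)))
      Filter.atTop (nhds (f a))) :
    ∀ n t : ℕ, t ≤ n →
      brunFvec i j f (n - t) (i n) ≥ 1 / ((fib2 (t + 1) : ℝ) + 1) := by
  classical
  intro n t htn
  have hex : ∀ m, ∃ φm, Freq (Ω m) φm := by
    intro m
    induction m with
    | zero => exact ⟨f, by rw [hΩ0]; exact hf⟩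
    | succ m ih =>
      obtain ⟨φm, h⟩ := ih
      obtain ⟨ψ, hψ, _⟩ := freq_step (i m) (j m) (hij m) (Ω (m+1)) (Ω m) (hΩ m) h
      exact ⟨ψ, hψ⟩
  set φ : ℕ → Fin 3 → ℝ := fun m => (hex m).choose with hφdef
  have hFreq : ∀ m, Freq (Ω m) (φ m) := fun m => (hex m).choose_spec
  have hrec : ∀ m a, φ m a
      = (φ (m+1) a + if a = i m then φ (m+1) (j m) else 0) / (1 + φ (m+1) (j m)) := by
    intro m a
    obtain ⟨ψ, hψ, hrel⟩ := freq_step (i m) (j m) (hij m) (Ω (m+1)) (Ω m) (hΩ m) (hFreq m)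
    have hψe : ψ = φ (m+1) := hψ.unique (hFreq (m+1))
    rw [← hψe]
    exact hrel a
  have hnn : ∀ m a, 0 ≤ φ m a := fun m => (hFreq m).nonneg
  have hle1 : ∀ m a, φ m a ≤ 1 := fun m => (hFreq m).le_one
  have hsum : ∀ m, ∑ a, φ m a = 1 := fun m => (hFreq m).sum_one
  have hji : ∀ m, φ m (j m) ≤ φ m (i m) :=
    fun m => freq_ji (i m) (j m) (hij m) _ _ (hΩ m) (hFreq m)
  have hmax := max_prop i j hij hadm hinf φ hnn hji hrec
  have hfω : Freq (Ω 0) f := by rw [hΩ0]; exact hf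
  have hf0 : φ 0 = f := (hFreq 0).unique hfω
  obtain ⟨lam, hlam, hE⟩ := prod_inv_eq i j hij f φ hf0 hnn hrec (n - t)
  have hBF : brunFvec i j f (n-t) (i n) = φ (n-t) (i n) := by
    unfold brunFvec
    rw [hE]
    simp only [Pi.smul_apply, smul_eq_mul]
    rw [← Finset.mul_sum, hsum (n-t), mul_one,
      mul_comm lam (φ (n-t) (i n)), mul_div_assoc, div_self hlam.ne', mul_one]
  rw [ge_iff_le, hBF]
  exact (fib_bound i j hij hadm φ hnn hle1 hsum hmax hrec t n htn).1
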